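/- Sharpness of the parity bound in a tripartite example: Let B := X ⊗ Y ⊗ X + X ⊗ Y ⊗ Z + Z ⊗ Z ⊗ Z. Then ‖B‖² = 5; moreover, for this configuration (n = 3, m = 3) the defect weights satisfy φ^{(3)}_{12} = φ^{(3)}_{13} = 0 and φ^{(3)}_{23} = 2, so that ‖B‖² = 5 = m + ∑_{1 ≤ i < j ≤ 3} φ^{(3)}_{ij}, i.e. the bound of Proposition 2.1 holds with equality. -/

import Mathlib

set_option maxHeartbeats 4000000
set_option synthInstance.maxHeartbeats 1000000


open scoped BigOperators ComplexOrder

namespace Parity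

variable {n : ℕ} {d : Fin n → ℕ}

/-- Kronecker product of `n` matrices, as a matrix over the product index set. -/
def kron (a : ∀ r : Fin n, Matrix (Fin (d r)) (Fin (d r)) ℂ) :
    Matrix (∀ r, Fin (d r)) (∀ r, Fin (d r)) ℂ :=
  fun i j => ∏ r, a r (i r) (j r)

/-- The ℓ²-operator norm of a complex matrix. -/
noncomputable def opNorm {I : Type*} [Fintype I] [DecidableEq I] (A : Matrix I I ℂ) : ℝ :=
  ‖Matrix.toEuclideanCLM (𝕜 := ℂ) A‖

/-- The defect weight φ⁽ⁿ⁾ᵢⱼ. -/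
noncomputable def phi {m : ℕ} (a : ∀ r : Fin n, Fin m → Matrix (Fin (d r)) (Fin (d r)) ℂ)
    (i j : Fin m) : ℝ :=
  (2 : ℝ) ^ ((1 : ℤ) - n) *
    ∑ S ∈ Finset.univ.filter (fun S : Finset (Fin n) => Even S.card),
      (∏ r ∈ S, opNorm (a r i * a r j - a r j * a r i)) *
        (∏ r ∈ Sᶜ, opNorm (a r i * a r j + a r j * a r i))

/-- A state: positive semidefinite with trace one. -/
def IsState {I : Type*} [Fintype I] (ρ : Matrix I I ℂ) : Prop :=
  ρ.PosSemidef ∧ ρ.trace = 1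

/-- The trace norm `Tr √(AᴴA)`. -/
noncomputable def traceNorm {I : Type*} [Fintype I] [DecidableEq I] (A : Matrix I I ℂ) : ℝ :=
  (Matrix.trace
    ((Matrix.posSemidef_conjTranspose_mul_self A).1.eigenvectorUnitary.1 *
      Matrix.diagonal (((↑) : ℝ → ℂ) ∘ Real.sqrt ∘ (Matrix.posSemidef_conjTranspose_mul_self A).1.eigenvalues) *
      (star (Matrix.posSemidef_conjTranspose_mul_self A).1.eigenvectorUnitary : Matrix I I ℂ))).re

/-- Logarithm of a Hermitian matrix via the functional calculus (junk value otherwise);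
an eigenvalue `0` contributes `Real.log 0 = 0`. -/
noncomputable def mlog {I : Type*} [Fintype I] [DecidableEq I] (A : Matrix I I ℂ) :
    Matrix I I ℂ :=
  if hA : A.IsHermitian then
    (hA.eigenvectorUnitary : Matrix I I ℂ) *
      Matrix.diagonal (fun i => (Real.log (hA.eigenvalues i) : ℂ)) *
      (star hA.eigenvectorUnitary : Matrix I I ℂ)
  else 0

/-- Quantum relative entropy `D(ρ‖σ) = Tr(ρ (log ρ − log σ))` (natural logarithm). -/
noncomputable def relEntropy {I : Type*} [Fintype I] [DecidableEq I] (ρ σ : Matrix I I ℂ) : ℝ :=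
  (Matrix.trace (ρ * (mlog ρ - mlog σ))).re

/-- The `r`-th marginal (partial trace over all other factors). -/
noncomputable def marginal (ρ : Matrix (∀ r, Fin (d r)) (∀ r, Fin (d r)) ℂ) (r : Fin n) :
    Matrix (Fin (d r)) (Fin (d r)) ℂ :=
  fun a b => ∑ k : ∀ s, Fin (d s), if k r = a then ρ k (Function.update k r b) else 0

/-- Total correlation `I_tot(ρ) = D(ρ‖ρ₁ ⊗ ⋯ ⊗ ρₙ)`. -/
noncomputable def Itot (ρ : Matrix (∀ r, Fin (d r)) (∀ r, Fin (d r)) ℂ) : ℝ :=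
  relEntropy ρ (kron (fun r => marginal ρ r))

/-- The set of product states. -/
def ProdStates (d : Fin n → ℕ) : Set (Matrix (∀ r, Fin (d r)) (∀ r, Fin (d r)) ℂ) :=
  {σ | ∃ s : ∀ r : Fin n, Matrix (Fin (d r)) (Fin (d r)) ℂ,
    (∀ r, IsState (s r)) ∧ σ = kron s}

/-- The product threshold `Γ_prod(B)`. -/
noncomputable def Gamma (d : Fin n → ℕ) (B : Matrix (∀ r, Fin (d r)) (∀ r, Fin (d r)) ℂ) : ℝ :=
  sSup {x : ℝ | ∃ σ ∈ ProdStates d, x = (Matrix.trace (σ * B)).re}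

/-- The excess `Δ_B(ρ)`. -/
noncomputable def excess (d : Fin n → ℕ) (B ρ : Matrix (∀ r, Fin (d r)) (∀ r, Fin (d r)) ℂ) : ℝ :=
  max ((Matrix.trace (ρ * B)).re - Gamma d B) 0

end Parity

namespace PauliSharp

def X : Matrix (Fin 2) (Fin 2) ℂ := !![0, 1; 1, 0]
def Y : Matrix (Fin 2) (Fin 2) ℂ := !![0, -Complex.I; Complex.I, 0]
def Z : Matrix (Fin 2) (Fin 2) ℂ := !![1, 0; 0, -1]

/-- The local families: site `r` carries the three observables `a r 0, a r 1, a r 2`. -/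
def a : Fin 3 → Fin 3 → Matrix (Fin 2) (Fin 2) ℂ :=
  ![![X, X, Z], ![Y, Y, Z], ![X, Z, Z]]

end PauliSharp

namespace SharpAux

open Parity Matrix

section OpNormLemmas

variable {I : Type*} [Fintype I] [DecidableEq I]

lemma opNorm_zero : opNorm (0 : Matrix I I ℂ) = 0 := by
  simp [opNorm]

lemma opNorm_smul (c : ℂ) (A : Matrix I I ℂ) : opNorm (c • A) = ‖c‖ * opNorm A := by
  rw [opNorm, _root_.map_smul, norm_smul c (Matrix.toEuclideanCLM (𝕜 := ℂ) A), opNorm]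

lemma opNorm_one [Nonempty I] : opNorm (1 : Matrix I I ℂ) = 1 := by
  rw [opNorm, _root_.map_one, norm_one]

lemma opNorm_unitary [Nonempty I] {A : Matrix I I ℂ} (h : Aᴴ * A = 1) : opNorm A = 1 := by
  have h2 : opNorm A * opNorm A = 1 := by
    have e : star (Matrix.toEuclideanCLM (𝕜 := ℂ) A) * Matrix.toEuclideanCLM (𝕜 := ℂ) A = 1 := by
      rw [← map_star, ← _root_.map_mul, Matrix.star_eq_conjTranspose, h, _root_.map_one]
    have := CStarRing.norm_star_mul_self (x := Matrix.toEuclideanCLM (𝕜 := ℂ) A)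
    rw [e, norm_one] at this
    rw [opNorm]
    linarith
  have h3 : (opNorm A - 1) * (opNorm A + 1) = 0 := by ring_nf; linarith
  have h0 : (0:ℝ) ≤ opNorm A := norm_nonneg _
  rcases mul_eq_zero.1 h3 with h | h
  · linarith
  · linarith

lemma opNorm_sq_herm {A : Matrix I I ℂ} (h : Aᴴ = A) : opNorm A ^ 2 = opNorm (A * A) := by
  have e : Matrix.toEuclideanCLM (𝕜 := ℂ) (A * A)
      = star (Matrix.toEuclideanCLM (𝕜 := ℂ) A) * Matrix.toEuclideanCLM (𝕜 := ℂ) A := by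
    rw [_root_.map_mul]
    congr 1
    rw [← map_star, Matrix.star_eq_conjTranspose, h]
  rw [opNorm, opNorm, sq, e]
  exact (CStarRing.norm_star_mul_self).symm

end OpNormLemmas

section KronLemmas

variable {n : ℕ} {d : Fin n → ℕ}

lemma kron_mul (a b : ∀ r : Fin n, Matrix (Fin (d r)) (Fin (d r)) ℂ) :
    kron a * kron b = kron (fun r => a r * b r) := by
  ext i j
  simp only [kron, Matrix.mul_apply]
  calc ∑ x : ∀ r, Fin (d r), (∏ r, a r (i r) (x r)) * ∏ r, b r (x r) (j r)
      = ∑ x : ∀ r, Fin (d r), ∏ r, (a r (i r) (x r) * b r (x r) (j r)) := by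
        simp [Finset.prod_mul_distrib]
    _ = ∏ r, ∑ y, a r (i r) y * b r y (j r) :=
        (Fintype.prod_sum (fun r (y : Fin (d r)) => a r (i r) y * b r y (j r))).symm

lemma kron_conjTranspose (a : ∀ r : Fin n, Matrix (Fin (d r)) (Fin (d r)) ℂ) :
    (kron a)ᴴ = kron (fun r => (a r)ᴴ) := by
  ext i j
  simp [kron, Matrix.conjTranspose_apply, map_prod]

lemma kron_one : kron (fun r : Fin n => (1 : Matrix (Fin (d r)) (Fin (d r)) ℂ)) = 1 := by
  ext i j
  simp only [kron, Matrix.one_apply]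
  by_cases h : i = j
  · subst h; simp
  · rw [if_neg h]
    obtain ⟨r, hr⟩ : ∃ r, i r ≠ j r := by
      by_contra hc; push_neg at hc; exact h (funext hc)
    exact Finset.prod_eq_zero (Finset.mem_univ r) (by simp [hr])

lemma kron_mulVec (a : ∀ r : Fin n, Matrix (Fin (d r)) (Fin (d r)) ℂ)
    (w : ∀ r : Fin n, Fin (d r) → ℂ) :
    (kron a).mulVec (fun k => ∏ r, w r (k r)) = fun k => ∏ r, (a r).mulVec (w r) (k r) := by
  funext i
  simp only [Matrix.mulVec, dotProduct, kron]
  calc ∑ x : ∀ r, Fin (d r), (∏ r, a r (i r) (x r)) * ∏ r, w r (x r)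
      = ∑ x : ∀ r, Fin (d r), ∏ r, (a r (i r) (x r) * w r (x r)) := by
        simp [Finset.prod_mul_distrib]
    _ = ∏ r, ∑ y, a r (i r) y * w r y :=
        (Fintype.prod_sum (fun r (y : Fin (d r)) => a r (i r) y * w r y)).symm

end KronLemmas

open PauliSharp

abbrev M2 := Matrix (Fin 2) (Fin 2) ℂ

noncomputable def K (M N P : M2) := kron (d := fun _ : Fin 3 => 2) ![M, N, P]

lemma K_apply (M N P : M2) (i j : ∀ _ : Fin 3, Fin 2) :
    K M N P i j = M (i 0) (j 0) * (N (i 1) (j 1) * P (i 2) (j 2)) := by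
  simp [K, kron, Fin.prod_univ_three, mul_assoc]

lemma K_neg1 (M N P : M2) : K (-M) N P = -(K M N P) := by
  funext i j; simp [K_apply]
lemma K_neg2 (M N P : M2) : K M (-N) P = -(K M N P) := by
  funext i j; simp [K_apply]
lemma K_neg3 (M N P : M2) : K M N (-P) = -(K M N P) := by
  funext i j; simp [K_apply]

lemma hXX : X * X = 1 := by
  ext i j; fin_cases i <;> fin_cases j <;>
    simp [X, Matrix.mul_apply, Fin.sum_univ_two, Matrix.one_apply]
lemma hYY : Y * Y = 1 := by
  ext i j; fin_cases i <;> fin_cases j <;>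
    simp [Y, Matrix.mul_apply, Fin.sum_univ_two, Matrix.one_apply]
lemma hZZ : Z * Z = 1 := by
  ext i j; fin_cases i <;> fin_cases j <;>
    simp [Z, Matrix.mul_apply, Fin.sum_univ_two, Matrix.one_apply]
lemma hXZ : X * Z = !![0, -1; 1, 0] := by
  ext i j; fin_cases i <;> fin_cases j <;>
    simp [X, Z, Matrix.mul_apply, Fin.sum_univ_two]
lemma hYZ : Y * Z = !![0, Complex.I; Complex.I, 0] := by
  ext i j; fin_cases i <;> fin_cases j <;>
    simp [Y, Z, Matrix.mul_apply, Fin.sum_univ_two]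
lemma hZX : Z * X = -(X * Z) := by
  ext i j; fin_cases i <;> fin_cases j <;>
    simp [X, Z, Matrix.mul_apply, Fin.sum_univ_two]
lemma hZY : Z * Y = -(Y * Z) := by
  ext i j; fin_cases i <;> fin_cases j <;>
    simp [Y, Z, Matrix.mul_apply, Fin.sum_univ_two]
lemma hXh : Xᴴ = X := by
  ext i j; fin_cases i <;> fin_cases j <;> simp [X]
lemma hYh : Yᴴ = Y := by
  ext i j; fin_cases i <;> fin_cases j <;> simp [Y]
lemma hZh : Zᴴ = Z := by
  ext i j; fin_cases i <;> fin_cases j <;> simp [Z]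
lemma hXZu : (X * Z)ᴴ * (X * Z) = 1 := by
  rw [conjTranspose_mul, hXh, hZh, mul_assoc, ← mul_assoc Z X, hZX, hXZ]
  ext i j; fin_cases i <;> fin_cases j <;>
    simp [Matrix.mul_apply, Fin.sum_univ_two, Matrix.one_apply]
lemma hYZu : (Y * Z)ᴴ * (Y * Z) = 1 := by
  rw [conjTranspose_mul, hYh, hZh, mul_assoc, ← mul_assoc Z Y, hZY, hYZ]
  ext i j; fin_cases i <;> fin_cases j <;>
    simp [Matrix.mul_apply, Fin.sum_univ_two, Matrix.one_apply]

lemma K_mul (M N P M' N' P' : M2) : K M N P * K M' N' P' = K (M*M') (N*N') (P*P') := by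
  rw [K, K, K, kron_mul]
  congr 1
  funext r; fin_cases r <;> rfl

lemma K_one : K 1 1 1 = 1 := by
  have h : (![(1:M2),1,1]) = fun _ : Fin 3 => (1:M2) := by funext r; fin_cases r <;> rfl
  rw [K, h, kron_one]

lemma K_conj (M N P : M2) : (K M N P)ᴴ = K Mᴴ Nᴴ Pᴴ := by
  rw [K, K, kron_conjTranspose]
  congr 1
  funext r; fin_cases r <;> rfl

lemma B_sq :
    (K X Y X + K X Y Z + K Z Z Z) * (K X Y X + K X Y Z + K Z Z Z) =
      (3 : ℂ) • (1 : Matrix (∀ _ : Fin 3, Fin 2) (∀ _ : Fin 3, Fin 2) ℂ)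
        + (2 : ℂ) • K (X*Z) (Y*Z) 1 := by
  simp only [add_mul, mul_add, K_mul]
  rw [hXX, hYY, hZZ, hZX, hZY]
  simp only [K_neg1, K_neg2, K_neg3, K_one, neg_neg]
  module

lemma B_herm : (K X Y X + K X Y Z + K Z Z Z)ᴴ = K X Y X + K X Y Z + K Z Z Z := by
  simp only [conjTranspose_add, K_conj, hXh, hYh, hZh]

lemma C_unitary : (K (X*Z) (Y*Z) 1)ᴴ * (K (X*Z) (Y*Z) 1) = 1 := by
  rw [K_conj, K_mul, hXZu, hYZu, conjTranspose_one, one_mul, K_one]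

end SharpAux

namespace SharpAux
open Parity Matrix PauliSharp

def w : ∀ _ : Fin 3, Fin 2 → ℂ := ![![1, Complex.I], ![1, 1], ![1, 0]]
noncomputable def v : (∀ _ : Fin 3, Fin 2) → ℂ := fun k => ∏ r, w r (k r)

lemma v_def : v = fun k => ∏ r, w r (k r) := rfl

lemma m0 : (X*Z).mulVec ![1, Complex.I] = ![-Complex.I, 1] := by
  rw [hXZ]; funext i; fin_cases i <;>
    simp [Matrix.mulVec, dotProduct, Fin.sum_univ_two]

lemma m1 : (Y*Z).mulVec ![1, 1] = ![Complex.I, Complex.I] := by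
  rw [hYZ]; funext i; fin_cases i <;>
    simp [Matrix.mulVec, dotProduct, Fin.sum_univ_two]

lemma C_mulVec : (K (X*Z) (Y*Z) 1).mulVec v = v := by
  rw [K, v_def, kron_mulVec]
  funext k
  have h0 : (![X*Z, Y*Z, 1] : Fin 3 → M2) 0 = X*Z := rfl
  have h1 : (![X*Z, Y*Z, 1] : Fin 3 → M2) 1 = Y*Z := rfl
  have h2 : (![X*Z, Y*Z, 1] : Fin 3 → M2) 2 = 1 := rfl
  have hw0 : w 0 = ![1, Complex.I] := rfl
  have hw1 : w 1 = ![1, 1] := rfl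
  have hw2 : w 2 = ![(1:ℂ), 0] := rfl
  simp only [Fin.prod_univ_three, h0, h1, h2, hw0, hw1, hw2, m0, m1, Matrix.one_mulVec]
  generalize k 0 = x0
  generalize k 1 = x1
  generalize k 2 = x2
  fin_cases x0 <;> fin_cases x1 <;> fin_cases x2 <;>
    simp [Complex.I_mul_I]

lemma M_mulVec :
    ((3 : ℂ) • (1 : Matrix (∀ _ : Fin 3, Fin 2) (∀ _ : Fin 3, Fin 2) ℂ)
      + (2 : ℂ) • K (X*Z) (Y*Z) 1).mulVec v = (5:ℂ) • v := by
  rw [Matrix.add_mulVec, Matrix.smul_mulVec, Matrix.smul_mulVec,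
    Matrix.one_mulVec, C_mulVec]
  module

lemma opNorm_B_sq : opNorm (K X Y X + K X Y Z + K Z Z Z) ^ 2 = 5 := by
  rw [opNorm_sq_herm B_herm, B_sq]
  set M := (3 : ℂ) • (1 : Matrix (∀ _ : Fin 3, Fin 2) (∀ _ : Fin 3, Fin 2) ℂ)
      + (2 : ℂ) • K (X*Z) (Y*Z) 1 with hM
  have hub : opNorm M ≤ 5 := by
    rw [opNorm, hM, map_add, _root_.map_smul, _root_.map_smul, _root_.map_one]
    refine le_trans (norm_add_le _ _) ?_
    rw [norm_smul (3:ℂ) (1 : EuclideanSpace ℂ (∀ _ : Fin 3, Fin 2) →L[ℂ] EuclideanSpace ℂ (∀ _ : Fin 3, Fin 2)),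
      norm_smul (2:ℂ) (Matrix.toEuclideanCLM (𝕜 := ℂ) (K (X*Z) (Y*Z) 1)), norm_one]
    have : ‖Matrix.toEuclideanCLM (𝕜 := ℂ) (K (X*Z) (Y*Z) 1)‖ = 1 := opNorm_unitary C_unitary
    rw [this]
    norm_num
  have hlb : 5 ≤ opNorm M := by
    set vE : EuclideanSpace ℂ (∀ _ : Fin 3, Fin 2) := (WithLp.equiv 2 _).symm v with hvE
    have hTv : Matrix.toEuclideanCLM (𝕜 := ℂ) M vE = (5:ℂ) • vE := by
      rw [hvE, WithLp.equiv_symm_apply, Matrix.toEuclideanCLM_toLp, M_mulVec,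
        WithLp.toLp_smul]
    have hv0 : vE ≠ 0 := by
      intro h
      have hv : v = 0 := by
        rw [hvE] at h
        simpa using congrArg (WithLp.equiv 2 _) h
      have := congrFun hv (fun _ => 0)
      simp [v, w, Fin.prod_univ_three] at this
    have hle := (Matrix.toEuclideanCLM (𝕜 := ℂ) M).le_opNorm vE
    rw [hTv, norm_smul] at hle
    have h5 : ‖(5:ℂ)‖ = 5 := by norm_num
    rw [h5] at hle
    have hpos : 0 < ‖vE‖ := norm_pos_iff.2 hv0
    rw [opNorm]
    nlinarith
  linarith

end SharpAux

namespace SharpAux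
open Parity Matrix PauliSharp

lemma o_comm_same (M : M2) : opNorm (M*M - M*M) = 0 := by
  rw [sub_self, opNorm_zero]

lemma o_anti_same (M : M2) (h : M * M = 1) : opNorm (M*M + M*M) = 2 := by
  rw [h, ← two_smul ℂ (1 : M2), opNorm_smul, opNorm_one]
  norm_num

lemma o_comm_XZ : opNorm (X*Z - Z*X) = 2 := by
  rw [hZX, sub_neg_eq_add, ← two_smul ℂ (X*Z), opNorm_smul, opNorm_unitary hXZu]
  norm_num

lemma o_anti_XZ : opNorm (X*Z + Z*X) = 0 := by
  rw [hZX, add_neg_cancel, opNorm_zero]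

lemma o_comm_YZ : opNorm (Y*Z - Z*Y) = 2 := by
  rw [hZY, sub_neg_eq_add, ← two_smul ℂ (Y*Z), opNorm_smul, opNorm_unitary hYZu]
  norm_num

lemma o_anti_YZ : opNorm (Y*Z + Z*Y) = 0 := by
  rw [hZY, add_neg_cancel, opNorm_zero]

lemma hfilt : (Finset.univ.filter (fun S : Finset (Fin 3) => Even S.card))
    = {∅, {0,1}, {0,2}, {1,2}} := by decide

lemma phi_expand {m : ℕ} (a : Fin 3 → Fin m → M2) (i j : Fin m) :
    phi (d := fun _ : Fin 3 => 2) a i j =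
      (1/4 : ℝ) * (
        (opNorm (a 0 i * a 0 j + a 0 j * a 0 i) * (opNorm (a 1 i * a 1 j + a 1 j * a 1 i)
          * opNorm (a 2 i * a 2 j + a 2 j * a 2 i)))
        + (opNorm (a 0 i * a 0 j - a 0 j * a 0 i) * opNorm (a 1 i * a 1 j - a 1 j * a 1 i))
            * opNorm (a 2 i * a 2 j + a 2 j * a 2 i)
        + (opNorm (a 0 i * a 0 j - a 0 j * a 0 i) * opNorm (a 2 i * a 2 j - a 2 j * a 2 i))
            * opNorm (a 1 i * a 1 j + a 1 j * a 1 i)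
        + (opNorm (a 1 i * a 1 j - a 1 j * a 1 i) * opNorm (a 2 i * a 2 j - a 2 j * a 2 i))
            * opNorm (a 0 i * a 0 j + a 0 j * a 0 i)) := by
  rw [phi, hfilt]
  rw [Finset.sum_insert (by decide), Finset.sum_insert (by decide),
    Finset.sum_insert (by decide), Finset.sum_singleton]
  rw [show ((∅:Finset (Fin 3))ᶜ) = Finset.univ from by decide,
    show (({0,1}:Finset (Fin 3))ᶜ) = {2} from by decide,
    show (({0,2}:Finset (Fin 3))ᶜ) = {1} from by decide,
    show (({1,2}:Finset (Fin 3))ᶜ) = {0} from by decide]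
  rw [Finset.prod_empty, Fin.prod_univ_three,
    Finset.prod_pair (by decide : (0:Fin 3) ≠ 1),
    Finset.prod_pair (by decide : (0:Fin 3) ≠ 2),
    Finset.prod_pair (by decide : (1:Fin 3) ≠ 2),
    Finset.prod_singleton, Finset.prod_singleton, Finset.prod_singleton]
  norm_num
  ring

lemma phi01 : phi (d := fun _ : Fin 3 => 2) a 0 1 = 0 := by
  rw [phi_expand]
  simp only [show a 0 0 = X from rfl, show a 0 1 = X from rfl, show a 1 0 = Y from rfl,
    show a 1 1 = Y from rfl, show a 2 0 = X from rfl, show a 2 1 = Z from rfl]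
  rw [o_comm_same, o_anti_same X hXX, o_anti_same Y hYY, o_comm_XZ, o_anti_XZ, o_comm_same]
  ring

lemma phi02 : phi (d := fun _ : Fin 3 => 2) a 0 2 = 0 := by
  rw [phi_expand]
  simp only [show a 0 0 = X from rfl, show a 0 2 = Z from rfl, show a 1 0 = Y from rfl,
    show a 1 2 = Z from rfl, show a 2 0 = X from rfl, show a 2 2 = Z from rfl]
  rw [o_comm_XZ, o_anti_XZ, o_comm_YZ, o_anti_YZ]
  ring

lemma phi12 : phi (d := fun _ : Fin 3 => 2) a 1 2 = 2 := by
  rw [phi_expand]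
  simp only [show a 0 1 = X from rfl, show a 0 2 = Z from rfl, show a 1 1 = Y from rfl,
    show a 1 2 = Z from rfl, show a 2 1 = Z from rfl, show a 2 2 = Z from rfl]
  rw [o_comm_XZ, o_anti_XZ, o_comm_YZ, o_anti_YZ, o_comm_same, o_anti_same Z hZZ]
  ring

end SharpAux

namespace SharpAux
open Parity Matrix PauliSharp

lemma hBsum : (∑ i : Fin 3, kron (d := fun _ => 2) (fun r => a r i))
    = K X Y X + K X Y Z + K Z Z Z := by
  rw [Fin.sum_univ_three]
  have e0 : kron (d := fun _ : Fin 3 => 2) (fun r => a r 0) = K X Y X := by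
    rw [K]; congr 1
    funext r; fin_cases r <;> rfl
  have e1 : kron (d := fun _ : Fin 3 => 2) (fun r => a r 1) = K X Y Z := by
    rw [K]; congr 1
    funext r; fin_cases r <;> rfl
  have e2 : kron (d := fun _ : Fin 3 => 2) (fun r => a r 2) = K Z Z Z := by
    rw [K]; congr 1
    funext r; fin_cases r <;> rfl
  rw [e0, e1, e2]

end SharpAux

open Parity PauliSharp in
/-- Sharpness of the parity bound for `B = X⊗Y⊗X + X⊗Y⊗Z + Z⊗Z⊗Z`. -/
theorem tripartite_parity_bound_sharp :
    opNorm (∑ i : Fin 3, kron (d := fun _ => 2) (fun r => a r i)) ^ 2 = 5 ∧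
    phi (d := fun _ => 2) a 0 1 = 0 ∧
    phi (d := fun _ => 2) a 0 2 = 0 ∧
    phi (d := fun _ => 2) a 1 2 = 2 ∧
    opNorm (∑ i : Fin 3, kron (d := fun _ => 2) (fun r => a r i)) ^ 2 =
      3 + ∑ i : Fin 3, ∑ j ∈ Finset.univ.filter (fun j => i < j),
        phi (d := fun _ => 2) a i j := by
  have h1 : opNorm (∑ i : Fin 3, kron (d := fun _ => 2) (fun r => a r i)) ^ 2 = 5 := by
    rw [SharpAux.hBsum]; exact SharpAux.opNorm_B_sq
  refine ⟨h1, SharpAux.phi01, SharpAux.phi02, SharpAux.phi12, ?_⟩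
  rw [h1, Fin.sum_univ_three]
  rw [show Finset.univ.filter (fun j : Fin 3 => 0 < j) = {1, 2} from by decide,
    show Finset.univ.filter (fun j : Fin 3 => 1 < j) = {2} from by decide,
    show Finset.univ.filter (fun j : Fin 3 => 2 < j) = ∅ from by decide]
  rw [Finset.sum_pair (by decide : (1 : Fin 3) ≠ 2), Finset.sum_singleton, Finset.sum_empty]
  rw [SharpAux.phi01, SharpAux.phi02, SharpAux.phi12]
  norm_num
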